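/- An eventually dendric shift space is minimal if and only if it is irreducible. -/

import Mathlib

/-- `L` is factorial: factors of its elements belong to it. -/
def Factorial {A : Type*} (L : Set (List A)) : Prop :=
  ∀ u v : List A, u ++ v ∈ L → u ∈ L ∧ v ∈ L

/-- `L` is (bi)extendable: every word extends by a letter on both sides. -/
def Extendable {A : Type*} (L : Set (List A)) : Prop :=
  ∀ w ∈ L, ∃ a b : A, a :: (w ++ [b]) ∈ L

/-- number of one-letter left extensions `ℓ(w)`. -/
noncomputable def lcount {A : Type*} (L : Set (List A)) (w : List A) : ℕ :=
  Set.ncard {a : A | a :: w ∈ L}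

/-- number of one-letter right extensions `r(w)`. -/
noncomputable def rcount {A : Type*} (L : Set (List A)) (w : List A) : ℕ :=
  Set.ncard {b : A | w ++ [b] ∈ L}

/-- number of one-letter bi-extensions `e(w)`. -/
noncomputable def ecount {A : Type*} (L : Set (List A)) (w : List A) : ℕ :=
  Set.ncard {p : A × A | p.1 :: (w ++ [p.2]) ∈ L}
/-- The extension graph `E₁(w)`: bipartite graph on `L₁(w) ⊔ R₁(w)` with
edges the pairs `(a,b)` such that `awb ∈ L`. -/
def extGraph {A : Type*} (L : Set (List A)) (w : List A) :
    SimpleGraph ({a : A // a :: w ∈ L} ⊕ {b : A // w ++ [b] ∈ L}) where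
  Adj x y :=
    match x, y with
    | Sum.inl a, Sum.inr b => a.1 :: (w ++ [b.1]) ∈ L
    | Sum.inr b, Sum.inl a => a.1 :: (w ++ [b.1]) ∈ L
    | _, _ => False
  symm := ⟨by rintro (a | b) (c | d) h <;> first | exact h | exact h.elim⟩
  loopless := ⟨by rintro (a | b) h <;> exact h.elim⟩

/-- `L` is eventually dendric with threshold `m`. -/
def EvDendricWith {A : Type*} (L : Set (List A)) (m : ℕ) : Prop :=
  ∀ w ∈ L, m ≤ w.length → (extGraph L w).IsTree

/-- `L` is eventually dendric. -/
def EvDendric {A : Type*} (L : Set (List A)) : Prop :=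
  ∃ m, EvDendricWith L m


section Aux
variable {A : Type*} [Fintype A] {L : Set (List A)} {z : List A}

lemma mem_of_cons (hfac : Factorial L) {a : A} {w : List A} (h : a :: w ∈ L) : w ∈ L := by
  have := (hfac [a] w (by simpa using h)).2
  exact this

lemma mem_of_snoc (hfac : Factorial L) {b : A} {w : List A} (h : w ++ [b] ∈ L) : w ∈ L :=
  (hfac w [b] h).1

lemma rcount_pos (hfac : Factorial L) (hext : Extendable L) {w : List A} (hw : w ∈ L) :
    1 ≤ rcount L w := by
  obtain ⟨a, b, hab⟩ := hext w hw
  have hb : w ++ [b] ∈ L := mem_of_cons hfac hab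
  have : {b : A | w ++ [b] ∈ L}.Nonempty := ⟨b, hb⟩
  have := Set.ncard_pos (Set.toFinite _) |>.2 this
  rw [rcount]; omega

lemma lcount_pos (hfac : Factorial L) (hext : Extendable L) {w : List A} (hw : w ∈ L) :
    1 ≤ lcount L w := by
  obtain ⟨a, b, hab⟩ := hext w hw
  have ha : a :: w ∈ L := by
    have := (hfac (a :: w) [b] (by simpa using hab)).1
    exact this
  have : {a : A | a :: w ∈ L}.Nonempty := ⟨a, ha⟩
  have := Set.ncard_pos (Set.toFinite _) |>.2 this
  rw [lcount]; omega

lemma rcount_zero (hfac : Factorial L) {w : List A} (hw : w ∉ L) : rcount L w = 0 := by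
  have : {b : A | w ++ [b] ∈ L} = ∅ := by
    ext b; simp only [Set.mem_setOf_eq, Set.mem_empty_iff_false, iff_false]
    exact fun h => hw (mem_of_snoc hfac h)
  rw [rcount, this, Set.ncard_empty]

lemma rcount_one {w : List A} (h : rcount L w = 1) {b c : A}
    (hb : w ++ [b] ∈ L) (hc : w ++ [c] ∈ L) : b = c := by
  obtain ⟨x, hx⟩ := Set.ncard_eq_one.1 h
  have hb' : b ∈ {b : A | w ++ [b] ∈ L} := hb
  have hc' : c ∈ {b : A | w ++ [b] ∈ L} := hc
  rw [hx] at hb' hc'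
  simp only [Set.mem_singleton_iff] at hb' hc'
  rw [hb', hc']

open Classical in
lemma ecount_eq_sum (hfac : Factorial L) (w : List A) :
    ecount L w = ∑ a : A, rcount L (a :: w) := by
  rw [ecount, ← Nat.card_coe_set_eq, Nat.card_eq_fintype_card]
  have e : ↥{p : A × A | p.1 :: (w ++ [p.2]) ∈ L} ≃ (a : A) × { b // a :: (w ++ [b]) ∈ L } :=
    Equiv.subtypeProdEquivSigmaSubtype (fun (a b : A) => a :: (w ++ [b]) ∈ L)
  rw [Fintype.card_congr e, Fintype.card_sigma]
  refine Finset.sum_congr rfl fun a _ => ?_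
  rw [rcount, ← Nat.card_coe_set_eq, Nat.card_eq_fintype_card]
  apply Fintype.card_congr
  apply Equiv.subtypeEquiv (Equiv.refl A)
  intro b
  simp [List.cons_append]

open Classical in
lemma lcount_eq_sum (w : List A) :
    lcount L w = ∑ a : A, (if a :: w ∈ L then 1 else 0) := by
  rw [lcount, Set.ncard_eq_toFinset_card', Set.toFinset_setOf, Finset.card_filter]

open Classical in
lemma tree_count (hfac : Factorial L) {w : List A}
    (htree : (extGraph L w).IsTree) :
    ecount L w + 1 = lcount L w + rcount L w := by
  set G := extGraph L w with hG
  letI : Fintype {a : A // a :: w ∈ L} := Fintype.ofFinite _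
  letI : Fintype {b : A // w ++ [b] ∈ L} := Fintype.ofFinite _
  letI : Fintype G.edgeSet := Fintype.ofFinite _
  have h1 : ∀ (a b : A), a :: (w ++ [b]) ∈ L → a :: w ∈ L := fun a b h =>
    mem_of_snoc hfac (by rw [List.cons_append]; exact h)
  have hcard := htree.card_edgeFinset
  have hV : Fintype.card ({a : A // a :: w ∈ L} ⊕ {b : A // w ++ [b] ∈ L})
      = lcount L w + rcount L w := by
    rw [Fintype.card_sum]
    rw [lcount, rcount, ← Nat.card_coe_set_eq, ← Nat.card_coe_set_eq,
      Nat.card_eq_fintype_card, Nat.card_eq_fintype_card]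
    congr 1 <;> exact Fintype.card_congr (Equiv.refl _)
  have hE : G.edgeFinset.card = ecount L w := by
    rw [SimpleGraph.edgeFinset_card, ecount, ← Nat.card_coe_set_eq, Nat.card_eq_fintype_card]
    apply Fintype.card_congr
    apply Equiv.symm
    refine Equiv.ofBijective (fun p =>
      ⟨s(Sum.inl ⟨p.1.1, h1 p.1.1 p.1.2 p.2⟩,
        Sum.inr ⟨p.1.2, mem_of_cons hfac p.2⟩), by
          rw [SimpleGraph.mem_edgeSet]; exact p.2⟩) ⟨?_, ?_⟩
    · rintro ⟨⟨a, b⟩, hab⟩ ⟨⟨a', b'⟩, hab'⟩ h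
      simp only [Subtype.mk.injEq, Sym2.eq_iff] at h
      rcases h with ⟨h1, h2⟩ | ⟨h1, h2⟩
      · apply Subtype.ext
        simp only [Sum.inl.injEq, Subtype.mk.injEq] at h1
        simp only [Sum.inr.injEq, Subtype.mk.injEq] at h2
        simp [Prod.ext_iff, h1, h2]
      · exact absurd h1 (by simp)
    · rintro ⟨e, he⟩
      induction e using Sym2.ind with
      | _ x y =>
        rw [SimpleGraph.mem_edgeSet] at he
        match x, y, he with
        | Sum.inl a, Sum.inr b, he =>
          exact ⟨⟨(a.1, b.1), he⟩, by apply Subtype.ext; simp⟩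
        | Sum.inr b, Sum.inl a, he =>
          refine ⟨⟨(a.1, b.1), he⟩, ?_⟩
          apply Subtype.ext
          simp [Sym2.eq_swap]
  omega

open Classical in
noncomputable def gg (L : Set (List A)) (z : List A) (u : List A) : ℕ :=
  if u ∈ L ∧ ¬ z <:+: u then rcount L u - 1 else 0

open Classical in
lemma step (hfac : Factorial L) (hext : Extendable L) {m : ℕ}
    (hden : EvDendricWith L m) (z : List A) {w : List A} (hw : m ≤ w.length) :
    (∑ a : A, gg L z (a :: w)) ≤ gg L z w ∧
    ((∑ a : A, gg L z (a :: w)) = gg L z w →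
      ∀ a : A, a :: w ∈ L → z <:+: (a :: w) → ¬ z <:+: w → rcount L (a :: w) = 1) := by
  by_cases hwL : w ∈ L
  · by_cases hz : z <:+: w
    · have hgw : gg L z w = 0 := if_neg (by tauto)
      have hga : ∀ a : A, gg L z (a :: w) = 0 := fun a =>
        if_neg (by rintro ⟨-, hni⟩; exact hni (List.infix_cons hz))
      refine ⟨by simp [hga, hgw], fun _ a _ _ hnz => absurd hz hnz⟩
    · have htree := hden w hwL hw
      have hT1 := tree_count hfac htree
      have hT2 := ecount_eq_sum hfac w
      have hsum : (∑ a : A, (if a :: w ∈ L then rcount L (a :: w) - 1 else 0))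
          + lcount L w = ∑ a : A, rcount L (a :: w) := by
        rw [lcount_eq_sum, ← Finset.sum_add_distrib]
        refine Finset.sum_congr rfl fun a _ => ?_
        by_cases haL : a :: w ∈ L
        · have := rcount_pos hfac hext haL
          simp only [haL, if_true]
          omega
        · have hz0 := rcount_zero hfac haL
          simp [haL, hz0]
      have hr1 : 1 ≤ rcount L w := rcount_pos hfac hext hwL
      have hle : ∀ a ∈ Finset.univ,
          gg L z (a :: w) ≤ (if a :: w ∈ L then rcount L (a :: w) - 1 else 0) := by
        intro a _
        by_cases hc : a :: w ∈ L ∧ ¬ z <:+: (a :: w)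
        · simp [gg, hc, hc.1]
        · simp only [gg, hc, if_false]
          positivity
      have hgw : gg L z w = rcount L w - 1 := if_pos ⟨hwL, hz⟩
      have hS := Finset.sum_le_sum hle
      refine ⟨by omega, ?_⟩
      intro heq a haL hza hnz
      have heq2 : (∑ a : A, gg L z (a :: w))
          = ∑ a : A, (if a :: w ∈ L then rcount L (a :: w) - 1 else 0) := by omega
      have hpt := (Finset.sum_eq_sum_iff_of_le hle).1 heq2 a (Finset.mem_univ a)
      have hg0 : gg L z (a :: w) = 0 := if_neg (by tauto)
      have hha : (if a :: w ∈ L then rcount L (a :: w) - 1 else 0)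
          = rcount L (a :: w) - 1 := if_pos haL
      have := rcount_pos hfac hext haL
      omega
  · have hgw : gg L z w = 0 := if_neg (by tauto)
    have hga : ∀ a : A, gg L z (a :: w) = 0 := fun a =>
      if_neg (fun hc => hwL (mem_of_cons hfac hc.1))
    exact ⟨by simp [hga, hgw], fun _ a haL _ _ => absurd (mem_of_cons hfac haL) hwL⟩

open Classical in
noncomputable def An (L : Set (List A)) (z : List A) (n : ℕ) : ℕ :=
  ∑ f : Fin n → A, gg L z (List.ofFn f)

lemma An_succ (L : Set (List A)) (z : List A) (n : ℕ) :
    An L z (n + 1) = ∑ f : Fin n → A, ∑ a : A, gg L z (a :: List.ofFn f) := by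
  rw [An]
  rw [← Fintype.sum_equiv (Fin.consEquiv (fun _ : Fin (n+1) => A))
    (fun p => gg L z (List.ofFn ((Fin.consEquiv fun _ => A) p)))
    (fun f => gg L z (List.ofFn f)) (fun p => rfl)]
  rw [Fintype.sum_prod_type]
  rw [Finset.sum_comm]
  refine Finset.sum_congr rfl fun f _ => Finset.sum_congr rfl fun a _ => ?_
  congr 1
  rw [List.ofFn_succ]
  simp [Fin.consEquiv]

lemma An_mono (hfac : Factorial L) (hext : Extendable L) {m : ℕ}
    (hden : EvDendricWith L m) (z : List A) {n : ℕ} (hn : m ≤ n) :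
    An L z (n + 1) ≤ An L z n := by
  rw [An_succ, An]
  refine Finset.sum_le_sum fun f _ => ?_
  exact (step hfac hext hden z (w := List.ofFn f) (by simp [hn])).1

lemma ev_const_aux : ∀ (v : ℕ) (f : ℕ → ℕ), f 0 ≤ v → (∀ n, f (n + 1) ≤ f n) →
    ∃ N, ∀ k, N ≤ k → f k = f N := by
  intro v
  induction v using Nat.strong_induction_on with
  | _ v ih =>
    intro f hv hf
    have hmono : ∀ i j, i ≤ j → f j ≤ f i := fun i j hij => by
      induction j with
      | zero => simp_all
      | succ j ihj =>
        rcases Nat.lt_or_ge i (j+1) with h' | h'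
        · exact le_trans (hf j) (ihj (by omega))
        · have : i = j + 1 := by omega
          simp [this]
    by_cases h : ∀ k, f k = f 0
    · exact ⟨0, fun k _ => by rw [h k, h 0]⟩
    · push_neg at h
      obtain ⟨k, hk⟩ := h
      have hlt : f k < f 0 := lt_of_le_of_ne (hmono 0 k (Nat.zero_le k)) hk
      obtain ⟨N, hN⟩ := ih (f k) (by omega) (fun n => f (n + k))
        (by simp) (fun n => by simpa [Nat.add_right_comm] using hf (n + k))
      refine ⟨N + k, fun j hj => ?_⟩
      have := hN (j - k) (by omega)
      have h2 : j - k + k = j := by omega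
      rw [h2] at this
      exact this

lemma ev_const (f : ℕ → ℕ) (hf : ∀ n, f (n + 1) ≤ f n) :
    ∃ N, ∀ k, N ≤ k → f k = f N :=
  ev_const_aux (f 0) f le_rfl hf

open Classical in
lemma RC1 (hfac : Factorial L) (hext : Extendable L) {m : ℕ}
    (hden : EvDendricWith L m) (z : List A) :
    ∃ N₁ : ℕ, ∀ u : List A, u ∈ L → N₁ + 1 ≤ u.length → z <:+: u → ¬ z <:+: u.drop 1 →
      rcount L u = 1 := by
  obtain ⟨N, hN⟩ := ev_const (fun k => An L z (m + k))
    (fun n => by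
      have := An_mono hfac hext hden z (n := m + n) (by omega)
      simpa [Nat.add_assoc] using this)
  refine ⟨m + N, ?_⟩
  intro u huL hlen hzu hnz
  cases u with
  | nil => simp at hlen
  | cons a w =>
    have hwlen : m + N ≤ w.length := by
      simp only [List.length_cons] at hlen; omega
    have heq : An L z (w.length + 1) = An L z w.length := by
      have e1 := hN (w.length - m) (by omega)
      have e2 := hN (w.length + 1 - m) (by omega)
      rw [show m + (w.length - m) = w.length by omega] at e1
      rw [show m + (w.length + 1 - m) = w.length + 1 by omega] at e2
      rw [e1, e2]
    have hle : ∀ f ∈ (Finset.univ : Finset (Fin w.length → A)),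
        (∑ b : A, gg L z (b :: List.ofFn f)) ≤ gg L z (List.ofFn f) := fun f _ =>
      (step hfac hext hden z (by simp; omega)).1
    have hsums : ∑ f : Fin w.length → A, (∑ b : A, gg L z (b :: List.ofFn f))
        = ∑ f : Fin w.length → A, gg L z (List.ofFn f) := by
      rw [← An_succ, heq, An]
    have hpt := (Finset.sum_eq_sum_iff_of_le hle).1 hsums w.get (Finset.mem_univ _)
    rw [List.ofFn_get] at hpt
    exact (step hfac hext hden z (w := w) (by omega)).2 hpt a huL hzu (by simpa using hnz)

omit [Fintype A] in
lemma infix_extract {z u : List A} (hzu : z <:+: u) (hnz : ¬ z <:+: u.drop 1) : z <+: u := by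
  obtain ⟨s, t, hst⟩ := hzu
  cases s with
  | nil => exact ⟨t, by simpa using hst⟩
  | cons c s' =>
    exfalso
    apply hnz
    have : u.drop 1 = s' ++ z ++ t := by rw [← hst]; rfl
    rw [this]
    exact ⟨s', t, rfl⟩

omit [Fintype A] in
lemma drop_one_prefix {Q w : List A} (h : Q <+: w) : Q.drop 1 <+: w.drop 1 := by
  obtain ⟨r, rfl⟩ := h
  cases Q with
  | nil => simp
  | cons a Q' => exact ⟨r, by simp⟩

omit [Fintype A] in
lemma suffix_of_suffix_len_le {t y w : List A} (h1 : t <:+ w) (h2 : y <:+ w)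
    (h : t.length ≤ y.length) : t <:+ y := by
  rw [← List.reverse_prefix] at h1 h2 ⊢
  exact List.prefix_of_prefix_length_le h1 h2 (by simpa using h)

omit [Fintype A] in
lemma min_suffix_aux : ∀ (n : ℕ) (w z t : List A), z ≠ [] → t <:+ w → z <+: t →
    t.length ≤ n → ∃ t', t' <:+ w ∧ z <+: t' ∧ ¬ z <:+: t'.drop 1 := by
  intro n
  induction n with
  | zero =>
    intro w z t hz htw hzt hlen
    have : t = [] := by cases t <;> simp_all
    subst this
    exact absurd (List.prefix_nil.1 hzt) hz
  | succ n ih =>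
    intro w z t hz htw hzt hlen
    by_cases hd : z <:+: t.drop 1
    · obtain ⟨p, q, hpq⟩ := hd
      refine ih w z (z ++ q) hz ?_ (List.prefix_append z q) ?_
      · have h1 : z ++ q <:+ t.drop 1 := ⟨p, by rw [← hpq, List.append_assoc]⟩
        exact h1.trans ((List.drop_suffix 1 t).trans htw)
      · have := congrArg List.length hpq
        simp only [List.length_append, List.length_drop] at this
        simp only [List.length_append]
        omega
    · exact ⟨t, htw, hzt, hd⟩

lemma S_take (hfac : Factorial L) {u : List A} (hu : u ∈ L) (hzu : z <:+: u)
    (hnz : ¬ z <:+: u.drop 1) {k : ℕ} (hk : z.length ≤ k) :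
    u.take k ∈ L ∧ z <:+: u.take k ∧ ¬ z <:+: (u.take k).drop 1 := by
  have hzp : z <+: u := infix_extract hzu hnz
  refine ⟨(hfac _ _ (by rw [List.take_append_drop]; exact hu)).1, ?_, ?_⟩
  · obtain ⟨r, rfl⟩ := hzp
    rw [List.take_append, List.take_of_length_le hk]
    exact (List.prefix_append _ _).isInfix
  · intro hcon
    apply hnz
    rw [List.drop_take] at hcon
    exact hcon.trans (List.take_prefix _ _).isInfix

omit [Fintype A] in
lemma mem_of_prefix (hfac : Factorial L) {p q : List A} (h : p <+: q) (hq : q ∈ L) : p ∈ L := by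
  obtain ⟨r, rfl⟩ := h
  exact (hfac p r hq).1

omit [Fintype A] in
lemma mem_of_suffix (hfac : Factorial L) {p q : List A} (h : p <:+ q) (hq : q ∈ L) : p ∈ L := by
  obtain ⟨r, rfl⟩ := h
  exact (hfac r p hq).2

lemma force (hfac : Factorial L) {N₁ : ℕ}
    (hRC : ∀ u : List A, u ∈ L → N₁ + 1 ≤ u.length → z <:+: u → ¬ z <:+: u.drop 1 →
      rcount L u = 1)
    {ust s w : List A} (hust_len : ust.length = N₁ + 1) (hz_ust : z <+: ust)
    (hP : ust ++ s ++ z ∈ L) (hw : w ∈ L) (hzw : ¬ z <:+: w.drop 1)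
    (hpre : ust <+: w) (hlen : ust.length + s.length + z.length ≤ w.length) :
    (ust ++ s ++ z) <+: w := by
  set P := ust ++ s ++ z with hPdef
  have hPlen : P.length = ust.length + (s.length + z.length) := by
    simp [hPdef, List.length_append]
  have hbase : P.take ust.length = ust := by
    rw [hPdef, List.append_assoc, List.take_left]
  have key : ∀ j, j ≤ s.length + z.length → P.take (ust.length + j) <+: w := by
    intro j
    induction j with
    | zero => intro _; rw [Nat.add_zero, hbase]; exact hpre
    | succ j ih =>
      intro hj
      have ihQ : P.take (ust.length + j) <+: w := ih (by omega)
      set Q := P.take (ust.length + j) with hQdef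
      have hQlen : Q.length = ust.length + j := by
        rw [hQdef, List.length_take]; omega
      have hQL : Q ∈ L := mem_of_prefix hfac ihQ hw
      have hustQ : ust <+: Q := by
        rw [List.prefix_iff_eq_take, hQdef, List.take_take]
        rw [show ust.length ⊓ (ust.length + j) = ust.length by omega, hbase]
      have hzQ : z <:+: Q := (hz_ust.trans hustQ).isInfix
      have hnd : ¬ z <:+: Q.drop 1 := fun hc => hzw (hc.trans (drop_one_prefix ihQ).isInfix)
      have hrc := hRC Q hQL (by omega) hzQ hnd
      have hiP : ust.length + j < P.length := by omega
      have hiw : ust.length + j < w.length := by omega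
      have hQP1 : P.take (ust.length + j + 1) = Q ++ [P[ust.length + j]] := by
        rw [List.take_succ, List.getElem?_eq_getElem hiP]; rfl
      have hQw1 : w.take (ust.length + j + 1) = Q ++ [w[ust.length + j]] := by
        rw [List.take_succ, List.getElem?_eq_getElem hiw]
        have hQw : w.take (ust.length + j) = Q := by
          rw [← hQlen]
          exact (List.prefix_iff_eq_take.1 ihQ).symm
        rw [hQw]
        rfl
      have h1 : Q ++ [P[ust.length + j]] ∈ L := by
        rw [← hQP1]; exact mem_of_prefix hfac (List.take_prefix _ _) hP
      have h2 : Q ++ [w[ust.length + j]] ∈ L := by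
        rw [← hQw1]; exact mem_of_prefix hfac (List.take_prefix _ _) hw
      have heq := rcount_one hrc h1 h2
      show List.take (ust.length + j + 1) P <+: w
      rw [hQP1, heq, ← hQw1]
      exact List.take_prefix _ _
  have := key (s.length + z.length) le_rfl
  rwa [← hPlen, List.take_length] at this

open Classical in
lemma backward (hfac : Factorial L) (hext : Extendable L) {m : ℕ}
    (hden : EvDendricWith L m)
    (hirr : ∀ u ∈ L, ∀ v ∈ L, ∃ s : List A, u ++ s ++ v ∈ L) {z : List A} (hz : z ∈ L) :
    ∃ n : ℕ, ∀ v ∈ L, v.length = n → z <:+: v := by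
  by_cases hz0 : z = []
  · exact ⟨0, fun v _ _ => hz0 ▸ List.nil_infix⟩
  by_contra hUR
  push_neg at hUR
  obtain ⟨N₀, hRC⟩ := RC1 hfac hext hden z
  set N₁ := max N₀ z.length with hN₁
  have hRC' : ∀ u, u ∈ L → N₁ + 1 ≤ u.length → z <:+: u → ¬ z <:+: u.drop 1 →
      rcount L u = 1 := fun u h1 h2 h3 h4 => hRC u h1 (by omega) h3 h4
  by_cases hbig : ∀ B : ℕ, ∃ u, (u ∈ L ∧ z <:+: u ∧ ¬ z <:+: u.drop 1) ∧ B ≤ u.length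
  · -- Case A : arbitrarily long words with unique occurrence of z at the start
    obtain ⟨d, hd⟩ : ∃ d : A, d ∈ z := by
      cases z with
      | nil => exact absurd rfl hz0
      | cons a t => exact ⟨a, List.mem_cons_self⟩
    set U : ℕ → List A := fun B => (hbig (max B (N₁+1))).choose with hUdef
    have hU : ∀ B, ((U B ∈ L ∧ z <:+: U B ∧ ¬ z <:+: (U B).drop 1) ∧
        max B (N₁+1) ≤ (U B).length) := fun B => (hbig (max B (N₁+1))).choose_spec
    set V : ℕ → List A := fun B => (U B).take (N₁ + 1) with hVdef
    have hVlen : ∀ B, (V B).length = N₁ + 1 := fun B => by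
      rw [hVdef]; simp only [List.length_take]
      have := (hU B).2; omega
    have hVS : ∀ B, V B ∈ L ∧ z <:+: V B ∧ ¬ z <:+: (V B).drop 1 := fun B =>
      S_take hfac (hU B).1.1 (hU B).1.2.1 (hU B).1.2.2 (by omega : z.length ≤ N₁ + 1)
    set φ : ℕ → (Fin (N₁+1) → A) := fun B i => (V B).getD i.1 d with hφ
    obtain ⟨y₀, hy₀⟩ := Finite.exists_infinite_fiber φ
    have hy₀' : (φ ⁻¹' {y₀}).Infinite := Set.infinite_coe_iff.1 hy₀
    obtain ⟨B₀, hB₀⟩ := hy₀'.nonempty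
    have hVeq : ∀ B, φ B = y₀ → V B = V B₀ := by
      intro B hB
      refine List.ext_getElem (by rw [hVlen, hVlen]) (fun n h1 h2 => ?_)
      have h1' : n < N₁ + 1 := by rw [hVlen] at h1; exact h1
      have hc := congrFun (hB.trans hB₀.symm) ⟨n, h1'⟩
      rw [← List.getD_eq_getElem (V B) d h1, ← List.getD_eq_getElem (V B₀) d h2]
      exact hc
    obtain ⟨s, hPmem⟩ := hirr (V B₀) (hVS B₀).1 z hz
    obtain ⟨B', hB'mem, hB'gt⟩ := hy₀'.exists_gt ((V B₀).length + s.length + z.length)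
    have hVB' : V B' = V B₀ := hVeq B' hB'mem
    have hpre : V B₀ <+: U B' := by
      rw [← hVB', hVdef]; exact List.take_prefix _ _
    have hlen : (V B₀).length + s.length + z.length ≤ (U B').length := by
      have := (hU B').2; omega
    have hforce := force hfac hRC' (hVlen B₀)
      (infix_extract (hVS B₀).2.1 (hVS B₀).2.2) hPmem (hU B').1.1 (hU B').1.2.2 hpre hlen
    apply (hU B').1.2.2
    have hne : V B₀ ≠ [] := by
      intro h; have := hVlen B₀; rw [h] at this; simp at this
    have h1 : z <:+: (V B₀ ++ s ++ z).drop 1 := by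
      rw [List.drop_append_of_le_length (by
        simp only [List.length_append]
        have := hVlen B₀; omega)]
      exact (List.suffix_append _ z).isInfix
    exact h1.trans (drop_one_prefix hforce).isInfix
  · -- Case B : bounded unique-occurrence words
    push_neg at hbig
    obtain ⟨B, hB⟩ := hbig
    obtain ⟨y, hyL, hylen, hyav⟩ := hUR (B + z.length)
    obtain ⟨s, hws⟩ := hirr z hz y hyL
    have hzw : z <+: z ++ s ++ y := by
      rw [List.append_assoc]; exact List.prefix_append _ _
    obtain ⟨t, htw, hzt, hnd⟩ := min_suffix_aux (z ++ s ++ y).length (z ++ s ++ y) z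
      (z ++ s ++ y) hz0 (List.suffix_refl _) hzw le_rfl
    have htL : t ∈ L := mem_of_suffix hfac htw hws
    have htB : t.length < B := hB t ⟨htL, hzt.isInfix, hnd⟩
    have hty : t <:+ y := suffix_of_suffix_len_le htw (List.suffix_append _ _) (by omega)
    exact hyav (hzt.isInfix.trans hty.isInfix)

end Aux


/-- A nonempty eventually dendric shift space is minimal (its language is
uniformly recurrent) if and only if it is irreducible (its language is
recurrent). -/
theorem stmt16 {A : Type*} [Fintype A] (L : Set (List A))
    (hfac : Factorial L) (hext : Extendable L) (hne : L.Nonempty)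
    (hdendric : EvDendric L) :
    (∀ w ∈ L, ∃ n : ℕ, ∀ v ∈ L, v.length = n → w <:+: v) ↔
      (∀ u ∈ L, ∀ v ∈ L, ∃ s : List A, u ++ s ++ v ∈ L) := by
  obtain ⟨m, hden⟩ := hdendric
  constructor
  · intro hUR u hu v hv
    obtain ⟨n, hn⟩ := hUR u hu
    have hbuild : ∀ k : ℕ, ∃ p : List A, p.length = k ∧ p ++ v ∈ L := by
      intro k
      induction k with
      | zero => exact ⟨[], rfl, by simpa using hv⟩
      | succ k ih =>
        obtain ⟨p, hp, hpv⟩ := ih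
        obtain ⟨a, b, hab⟩ := hext (p ++ v) hpv
        have h1 : (a :: (p ++ v)) ++ [b] ∈ L := by
          rw [List.cons_append]; exact hab
        have h2 : a :: (p ++ v) ∈ L := (hfac _ [b] h1).1
        exact ⟨a :: p, by simp [hp], by simpa using h2⟩
    obtain ⟨p, hp, hpv⟩ := hbuild n
    have hpL : p ∈ L := (hfac p v hpv).1
    obtain ⟨x, y, hxy⟩ := hn p hpL hp
    refine ⟨y, ?_⟩
    rw [← hxy] at hpv
    simp only [List.append_assoc] at hpv ⊢
    exact (hfac _ _ hpv).2
  · intro hirr w hw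
    exact backward hfac hext hden hirr hw
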